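/- Let C_i ⊆ H, i ∈ I = {1,…,m}, be closed convex sets with C := ⋂_{i∈I} C_i ≠ ∅, and let {x^k} be generated by the double-layer projection algorithm x^{k+1} := x^k + α_k(Σ_{i∈I_k} ω_i^k P_{C_i} x^k − x^k) under conditions (i) and (ii), and assume (iii): if lim_{k→∞} max_{i∈I_k} d(x^k, C_i) = 0 then lim_{k→∞} max_{j∈J_k} d(x^k, C_j) = 0. Then {x^k} converges weakly to some point x^∞ ∈ C. Moreover, if the family {C_i : i ∈ I} is boundedly regular, then the convergence to x^∞ is in norm. -/

import Mathlib

set_option maxHeartbeats 1000000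

open Filter Metric Bornology Topology RealInnerProductSpace

section Aux
variable {H : Type*} [NormedAddCommGroup H] [InnerProductSpace ℝ H] [CompleteSpace H]

lemma combo_sq (a b : H) (t : ℝ) :
    ‖(1-t)•a + t•b‖^2 = (1-t)*‖a‖^2 + t*‖b‖^2 - t*(1-t)*‖a-b‖^2 := by
  have h1 := norm_add_sq_real ((1-t)•a) (t•b)
  have h2 := norm_sub_sq_real a b
  rw [real_inner_smul_left, real_inner_smul_right, norm_smul, norm_smul] at h1
  rw [Real.norm_eq_abs, Real.norm_eq_abs, mul_pow, mul_pow, sq_abs, sq_abs] at h1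
  nlinarith [h1, h2]

lemma jensen_sq {ι : Type*} {s : Finset ι} (w : ι → ℝ) (v : ι → H)
    (hw : ∀ i ∈ s, 0 ≤ w i) (hsum : ∑ i ∈ s, w i = 1) :
    ‖∑ i ∈ s, w i • v i‖^2 ≤ ∑ i ∈ s, w i * ‖v i‖^2 := by
  have h1 : ‖∑ i ∈ s, w i • v i‖ ≤ ∑ i ∈ s, w i * ‖v i‖ := by
    refine (norm_sum_le _ _).trans ?_
    refine Finset.sum_le_sum fun i hi => ?_
    rw [norm_smul, Real.norm_eq_abs, abs_of_nonneg (hw i hi)]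
  have h2 : (∑ i ∈ s, w i * ‖v i‖)^2 ≤ (∑ i ∈ s, w i) * (∑ i ∈ s, w i * ‖v i‖^2) := by
    have := Finset.sum_mul_sq_le_sq_mul_sq s (fun i => Real.sqrt (w i))
      (fun i => Real.sqrt (w i) * ‖v i‖)
    calc (∑ i ∈ s, w i * ‖v i‖)^2
        = (∑ i ∈ s, Real.sqrt (w i) * (Real.sqrt (w i) * ‖v i‖))^2 := by
          congr 1; refine Finset.sum_congr rfl fun i hi => ?_
          rw [← mul_assoc, Real.mul_self_sqrt (hw i hi)]
      _ ≤ (∑ i ∈ s, Real.sqrt (w i)^2) * (∑ i ∈ s, (Real.sqrt (w i) * ‖v i‖)^2) := this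
      _ = (∑ i ∈ s, w i) * (∑ i ∈ s, w i * ‖v i‖^2) := by
          congr 1
          · exact Finset.sum_congr rfl fun i hi => Real.sq_sqrt (hw i hi)
          · refine Finset.sum_congr rfl fun i hi => ?_
            rw [mul_pow, Real.sq_sqrt (hw i hi)]
  have h3 : (0:ℝ) ≤ ‖∑ i ∈ s, w i • v i‖ := norm_nonneg _
  nlinarith [h1, h2, hsum]

lemma proj_var_ineq {K : Set H} (hcv : Convex ℝ K) {y p : H} (hp : p ∈ K)
    (hd : ‖y - p‖ = infDist y K) : ∀ z ∈ K, ⟪y - p, z - p⟫ ≤ 0 := by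
  rw [infDist_eq_iInf] at hd
  simp only [dist_eq_norm] at hd
  exact (norm_eq_iInf_iff_real_inner_le_zero hcv hp).mp hd

lemma proj_sq_ineq {K : Set H} (hcv : Convex ℝ K) {y p : H} (hp : p ∈ K)
    (hd : ‖y - p‖ = infDist y K) : ∀ z ∈ K, ‖p - z‖^2 + ‖y - p‖^2 ≤ ‖y - z‖^2 := by
  intro z hz
  have h1 := proj_var_ineq hcv hp hd z hz
  have h2 : ‖y - z‖^2 = ‖(y - p) + (p - z)‖^2 := by rw [sub_add_sub_cancel]
  rw [norm_add_sq_real] at h2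
  have h3 : ⟪y - p, p - z⟫ = -⟪y - p, z - p⟫ := by
    rw [← inner_neg_right, neg_sub]
  nlinarith [h1, h2, h3]

lemma exists_weak_subseq (y : ℕ → H) (M : ℝ) (hM : ∀ k, ‖y k‖ ≤ M) :
    ∃ φ : ℕ → ℕ, StrictMono φ ∧ ∃ p : H,
      ∀ w : H, Tendsto (fun k => ⟪y (φ k), w⟫) atTop (𝓝 ⟪p, w⟫) := by
  have hM0 : 0 ≤ M := le_trans (norm_nonneg _) (hM 0)
  set K : Submodule ℝ H := (Submodule.span ℝ (Set.range y)).topologicalClosure with hK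
  haveI : CompleteSpace K := (Submodule.isClosed_topologicalClosure _).completeSpace_coe
  have hyK : ∀ k, y k ∈ K :=
    fun k => (Submodule.le_topologicalClosure _) (Submodule.subset_span ⟨k, rfl⟩)
  -- separability
  have hsep : TopologicalSpace.IsSeparable (K : Set H) := by
    refine TopologicalSpace.IsSeparable.closure ?_
    exact TopologicalSpace.IsSeparable.span ((Set.countable_range y).isSeparable)
  obtain ⟨c, hccount, hcsub⟩ := hsep
  obtain ⟨d, hd⟩ : ∃ d : ℕ → H, c ∪ {0} = Set.range d :=
    (hccount.union (Set.countable_singleton 0)).exists_eq_range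
      (Set.union_nonempty.mpr (Or.inr ⟨0, rfl⟩))
  have hcsub' : (K : Set H) ⊆ closure (Set.range d) := by
    rw [← hd]
    exact hcsub.trans (closure_mono Set.subset_union_left)
  -- diagonal extraction
  set S : Set (ℕ → ℝ) := Set.pi Set.univ (fun n => Set.Icc (-(M*‖d n‖)) (M*‖d n‖)) with hS
  have hScomp : IsCompact S := isCompact_univ_pi fun n => isCompact_Icc
  have hmem : ∀ k, (fun n => ⟪y k, d n⟫) ∈ S := by
    intro k n _
    have := abs_real_inner_le_norm (y k) (d n)
    have h2 : ‖y k‖ * ‖d n‖ ≤ M * ‖d n‖ :=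
      mul_le_mul_of_nonneg_right (hM k) (norm_nonneg _)
    constructor <;> [skip; skip] <;> cases abs_le.mp (this.trans h2) <;> linarith
  obtain ⟨g, -, φ, hφ, hconv⟩ := hScomp.isSeqCompact hmem
  have hpt : ∀ n, Tendsto (fun k => ⟪y (φ k), d n⟫) atTop (𝓝 (g n)) := by
    rw [tendsto_pi_nhds] at hconv
    exact fun n => hconv n
  refine ⟨φ, hφ, ?_⟩
  -- existence of limit for each w
  have key : ∀ w : H, ∃ L : ℝ, Tendsto (fun k => ⟪y (φ k), w⟫) atTop (𝓝 L) := by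
    intro w
    set w' : H := (Submodule.orthogonalProjection K w : H) with hw'
    have hred : ∀ k, ⟪y (φ k), w⟫ = ⟪y (φ k), w'⟫ := by
      intro k
      have horth : w - w' ∈ Kᗮ := Submodule.sub_starProjection_mem_orthogonal w
      have : ⟪y (φ k), w - w'⟫ = 0 := by
        have h0 := horth (y (φ k)) (hyK (φ k))
        exact h0
      have h2 : ⟪y (φ k), w⟫ - ⟪y (φ k), w'⟫ = ⟪y (φ k), w - w'⟫ := by
        rw [inner_sub_right]
      linarith [h2, this]
    simp only [hred]
    have hw'K : w' ∈ closure (Set.range d) :=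
      hcsub' (Submodule.coe_mem (Submodule.orthogonalProjection K w))
    have hcauchy : CauchySeq (fun k => ⟪y (φ k), w'⟫) := by
      rw [Metric.cauchySeq_iff]
      intro ε hε
      obtain ⟨b, hb, hdist⟩ := Metric.mem_closure_iff.mp hw'K (ε/(3*(M+1)))
        (by positivity)
      obtain ⟨n, rfl⟩ : ∃ n, d n = b := by
        obtain ⟨n, hn⟩ := Set.mem_range.mp (hd ▸ hb : b ∈ Set.range d)
        exact ⟨n, hn⟩
      have hc : CauchySeq (fun k => ⟪y (φ k), d n⟫) := (hpt n).cauchySeq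
      rw [Metric.cauchySeq_iff] at hc
      obtain ⟨N, hN⟩ := hc (ε/3) (by positivity)
      refine ⟨N, fun j hj i hi => ?_⟩
      have hest : ∀ l, |⟪y (φ l), w'⟫ - ⟪y (φ l), d n⟫| ≤ ε/3 := by
        intro l
        have h1 : ⟪y (φ l), w'⟫ - ⟪y (φ l), d n⟫ = ⟪y (φ l), w' - d n⟫ := by
          rw [inner_sub_right]
        rw [h1]
        have h2 := abs_real_inner_le_norm (y (φ l)) (w' - d n)
        have h3 : ‖w' - d n‖ ≤ ε/(3*(M+1)) := by
          rw [dist_eq_norm] at hdist; linarith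
        have h4 : ‖y (φ l)‖ * ‖w' - d n‖ ≤ M * (ε/(3*(M+1))) :=
          mul_le_mul (hM _) h3 (norm_nonneg _) hM0
        have h5 : M * (ε/(3*(M+1))) ≤ ε/3 := by
          rw [← mul_div_assoc, div_le_div_iff₀ (by positivity) (by norm_num : (0:ℝ) < 3)]
          nlinarith [hε.le, hM0]
        linarith [h2.trans (h4.trans h5)]
      have := hN j hj i hi
      rw [Real.dist_eq] at this ⊢
      have e1 := hest j; have e2 := hest i
      have : |⟪y (φ j), w'⟫ - ⟪y (φ i), w'⟫| ≤
          |⟪y (φ j), w'⟫ - ⟪y (φ j), d n⟫| + |⟪y (φ j), d n⟫ - ⟪y (φ i), d n⟫|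
            + |⟪y (φ i), d n⟫ - ⟪y (φ i), w'⟫| := by
        have := abs_sub_le (⟪y (φ j), w'⟫) (⟪y (φ j), d n⟫) (⟪y (φ i), w'⟫)
        have := abs_sub_le (⟪y (φ j), d n⟫) (⟪y (φ i), d n⟫) (⟪y (φ i), w'⟫)
        linarith [abs_sub_le (⟪y (φ j), w'⟫) (⟪y (φ j), d n⟫) (⟪y (φ i), w'⟫),
          abs_sub_le (⟪y (φ j), d n⟫) (⟪y (φ i), d n⟫) (⟪y (φ i), w'⟫)]
      rw [abs_sub_comm (⟪y (φ i), d n⟫) (⟪y (φ i), w'⟫)] at this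
      linarith [hN j hj i hi, hest j, hest i, this,
        (Real.dist_eq _ _ ▸ hN j hj i hi : |⟪y (φ j), d n⟫ - ⟪y (φ i), d n⟫| < ε/3)]
    exact cauchySeq_tendsto_of_complete hcauchy
  -- build the limit functional
  choose Lfun hLfun using key
  have hadd : ∀ u v : H, Lfun (u + v) = Lfun u + Lfun v := by
    intro u v
    refine tendsto_nhds_unique (hLfun (u+v)) ?_
    have := (hLfun u).add (hLfun v)
    simpa only [← inner_add_right] using this
  have hsmul : ∀ (r : ℝ) (u : H), Lfun (r • u) = r * Lfun u := by
    intro r u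
    refine tendsto_nhds_unique (hLfun (r • u)) ?_
    have := (hLfun u).const_mul r
    simpa only [← real_inner_smul_right] using this
  have hbound : ∀ u : H, ‖Lfun u‖ ≤ M * ‖u‖ := by
    intro u
    have : ∀ k, ‖⟪y (φ k), u⟫‖ ≤ M * ‖u‖ := by
      intro k
      rw [Real.norm_eq_abs]
      exact (abs_real_inner_le_norm _ _).trans
        (mul_le_mul_of_nonneg_right (hM _) (norm_nonneg _))
    have hnorm : Tendsto (fun k => ‖⟪y (φ k), u⟫‖) atTop (𝓝 ‖Lfun u‖) :=
      (hLfun u).norm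
    exact le_of_tendsto hnorm (Eventually.of_forall this)
  let f : H →ₗ[ℝ] ℝ :=
    { toFun := Lfun
      map_add' := hadd
      map_smul' := hsmul }
  let fc : H →L[ℝ] ℝ := f.mkContinuous M hbound
  refine ⟨(InnerProductSpace.toDual ℝ H).symm fc, fun w => ?_⟩
  have : ⟪(InnerProductSpace.toDual ℝ H).symm fc, w⟫ = fc w :=
    InnerProductSpace.toDual_symm_apply
  rw [this]
  exact hLfun w



lemma weak_subseq_mem {m : ℕ} (Cs : Fin m → Set H) (hCscl : ∀ i, IsClosed (Cs i))
    (hCscv : ∀ i, Convex ℝ (Cs i)) (P : Fin m → H → H)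
    (hP : ∀ i, ∀ y : H, P i y ∈ Cs i ∧ ‖y - P i y‖ = infDist y (Cs i))
    (y : ℕ → H) (M : ℝ) (hM : ∀ k, ‖y k‖ ≤ M)
    (hdist : ∀ i, Tendsto (fun k => infDist (y k) (Cs i)) atTop (𝓝 0)) :
    ∃ φ : ℕ → ℕ, StrictMono φ ∧ ∃ p : H, p ∈ (⋂ i, Cs i) ∧
      ∀ w : H, Tendsto (fun k => ⟪y (φ k), w⟫) atTop (𝓝 ⟪p, w⟫) := by
  obtain ⟨φ, hφ, p, hw⟩ := exists_weak_subseq y M hM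
  refine ⟨φ, hφ, p, ?_, hw⟩
  rw [Set.mem_iInter]
  intro i
  by_contra hout
  obtain ⟨f, u, hfp, hfb⟩ := geometric_hahn_banach_point_closed (hCscv i) (hCscl i) hout
  set wv : H := (InnerProductSpace.toDual ℝ H).symm f with hwv
  have hfeq : ∀ v : H, f v = ⟪v, wv⟫ := by
    intro v
    rw [real_inner_comm]
    exact (InnerProductSpace.toDual_symm_apply).symm
  have hdiff : Tendsto (fun k => y (φ k) - P i (y (φ k))) atTop (𝓝 0) := by
    refine squeeze_zero_norm (fun k => le_of_eq (hP i (y (φ k))).2) ?_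
    exact (hdist i).comp hφ.tendsto_atTop
  have h2 : Tendsto (fun k => ⟪y (φ k) - P i (y (φ k)), wv⟫) atTop (𝓝 0) := by
    have := Filter.Tendsto.inner (𝕜 := ℝ) hdiff (tendsto_const_nhds (x := wv) (f := atTop))
    simpa using this
  have hconv : Tendsto (fun k => ⟪P i (y (φ k)), wv⟫) atTop (𝓝 ⟪p, wv⟫) := by
    have h3 := (hw wv).sub h2
    rw [sub_zero] at h3
    refine h3.congr fun k => ?_
    rw [inner_sub_left]; ring
  have hge : u ≤ ⟪p, wv⟫ :=
    ge_of_tendsto' hconv fun k => le_of_lt (by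
      have := hfb _ (hP i (y (φ k))).1
      rwa [hfeq] at this)
  rw [hfeq] at hfp
  linarith

end Aux

theorem doubleLayer_projection_convergence
    {H : Type*} [NormedAddCommGroup H] [InnerProductSpace ℝ H] [CompleteSpace H]
    {m : ℕ} [NeZero m]
    (Cs : Fin m → Set H)
    (hCscl : ∀ i, IsClosed (Cs i)) (hCscv : ∀ i, Convex ℝ (Cs i))
    (hCsne : ∀ i, (Cs i).Nonempty) (hC : (⋂ i, Cs i).Nonempty)
    (P : Fin m → H → H)
    (hP : ∀ i, ∀ y : H, P i y ∈ Cs i ∧ ‖y - P i y‖ = infDist y (Cs i))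
    (x : ℕ → H) (Ik Jk : ℕ → Finset (Fin m)) (α : ℕ → ℝ) (ω : ℕ → Fin m → ℝ)
    (hIkne : ∀ k, (Ik k).Nonempty) (hIJ : ∀ k, Ik k ⊆ Jk k)
    (αminus αplus ωminus : ℝ)
    (hαminus : αminus ∈ Set.Ioc (0 : ℝ) 1) (hαplus : αplus ∈ Set.Ico (1 : ℝ) 2)
    (hωminus : ωminus ∈ Set.Ioc (0 : ℝ) 1)
    (hα : ∀ k, α k ∈ Set.Icc αminus αplus)
    (hω : ∀ k, ∀ i ∈ Ik k, ω k i ∈ Set.Icc ωminus 1)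
    (hωsum : ∀ k, ∑ i ∈ Ik k, ω k i = 1)
    (hrec : ∀ k, x (k + 1) = x k + α k • ((∑ i ∈ Ik k, ω k i • P i (x k)) - x k))
    (s : ℕ) (hs : 1 ≤ s)
    (hcover : ∀ k, ∀ i : Fin m, ∃ l < s, i ∈ Jk (k + l))
    (hiii : Tendsto (fun k => (Ik k).sup' (hIkne k) fun i => infDist (x k) (Cs i))
        atTop (nhds 0) →
      Tendsto (fun k => (Jk k).sup' ((hIkne k).mono (hIJ k)) fun i =>
        infDist (x k) (Cs i)) atTop (nhds 0)) :
    ∃ xinf ∈ ⋂ i, Cs i,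
      (∀ w : H, Tendsto (fun k => ⟪x k, w⟫) atTop (nhds ⟪xinf, w⟫)) ∧
      ((∀ y : ℕ → H, IsBounded (Set.range y) →
        Tendsto (fun k => Finset.univ.sup' Finset.univ_nonempty fun i =>
          infDist (y k) (Cs i)) atTop (nhds 0) →
        Tendsto (fun k => infDist (y k) (⋂ i, Cs i)) atTop (nhds 0)) →
        Tendsto x atTop (nhds xinf)) := by
  classical
  obtain ⟨z0, hz0⟩ := hC
  set T : ℕ → H := fun k => ∑ i ∈ Ik k, ω k i • P i (x k) with hT
  set S : ℕ → ℝ := fun k => ∑ i ∈ Ik k, ω k i * ‖x k - P i (x k)‖^2 with hS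
  set c : ℝ := min αminus (2 - αplus) with hc
  have hcpos : 0 < c := lt_min hαminus.1 (by linarith [hαplus.2])
  have hωnn : ∀ k, ∀ i ∈ Ik k, 0 ≤ ω k i :=
    fun k i hi => le_trans hωminus.1.le (hω k i hi).1
  have hSnn : ∀ k, 0 ≤ S k := fun k =>
    Finset.sum_nonneg fun i hi => mul_nonneg (hωnn k i hi) (sq_nonneg _)
  -- the per-index projected distances
  have hPd : ∀ k, ∀ i, ‖x k - P i (x k)‖ = infDist (x k) (Cs i) :=
    fun k i => (hP i (x k)).2
  -- Jensen for the displacement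
  have hTxrepr : ∀ k, T k - x k = ∑ i ∈ Ik k, ω k i • (P i (x k) - x k) := by
    intro k
    simp only [smul_sub]
    rw [Finset.sum_sub_distrib, ← Finset.sum_smul, hωsum k, one_smul]
  have hTxS : ∀ k, ‖T k - x k‖^2 ≤ S k := by
    intro k
    rw [hTxrepr k]
    refine (jensen_sq _ _ (hωnn k) (hωsum k)).trans ?_
    refine Finset.sum_le_sum fun i hi => ?_
    rw [norm_sub_rev]
  -- Fejér monotonicity
  have hfejer : ∀ z, z ∈ (⋂ i, Cs i) → ∀ k,
      ‖x (k+1) - z‖^2 + c * S k ≤ ‖x k - z‖^2 := by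
    intro z hz k
    have hzi : ∀ i, z ∈ Cs i := Set.mem_iInter.mp hz
    have hrepr : x (k+1) - z = (1 - α k) • (x k - z) + α k • (T k - z) := by
      rw [hrec k]
      module
    have hcombo := combo_sq (x k - z) (T k - z) (α k)
    rw [← hrepr, show (x k - z) - (T k - z) = x k - T k by abel] at hcombo
    have hTzrepr : T k - z = ∑ i ∈ Ik k, ω k i • (P i (x k) - z) := by
      simp only [smul_sub]
      rw [Finset.sum_sub_distrib, ← Finset.sum_smul, hωsum k, one_smul]
    have hJ1 : ‖T k - z‖^2 ≤ ∑ i ∈ Ik k, ω k i * ‖P i (x k) - z‖^2 := by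
      rw [hTzrepr]
      exact jensen_sq _ _ (hωnn k) (hωsum k)
    have hproj : ∀ i ∈ Ik k,
        ‖P i (x k) - z‖^2 ≤ ‖x k - z‖^2 - ‖x k - P i (x k)‖^2 := by
      intro i hi
      have := proj_sq_ineq (hCscv i) (hP i (x k)).1 (hP i (x k)).2 z (hzi i)
      linarith
    have hJ1' : ‖T k - z‖^2 ≤ ‖x k - z‖^2 - S k := by
      refine hJ1.trans ?_
      have h1 : ∑ i ∈ Ik k, ω k i * ‖P i (x k) - z‖^2 ≤
          ∑ i ∈ Ik k, ω k i * (‖x k - z‖^2 - ‖x k - P i (x k)‖^2) :=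
        Finset.sum_le_sum fun i hi =>
          mul_le_mul_of_nonneg_left (hproj i hi) (hωnn k i hi)
      refine h1.trans (le_of_eq ?_)
      rw [hS]
      simp only [mul_sub]
      rw [Finset.sum_sub_distrib, ← Finset.sum_mul, hωsum k, one_mul]
    have hD : ‖x k - T k‖^2 ≤ S k := by rw [norm_sub_rev]; exact hTxS k
    have hDnn : (0:ℝ) ≤ ‖x k - T k‖^2 := sq_nonneg _
    obtain ⟨hα1, hα2⟩ := hα k
    have hαpos : 0 < α k := lt_of_lt_of_le hαminus.1 hα1
    have hSk := hSnn k
    rcases le_or_gt (α k) 1 with h1 | h1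
    · have hca : c ≤ α k := (min_le_left _ _).trans hα1
      have hmul : α k * ‖T k - z‖^2 ≤ α k * (‖x k - z‖^2 - S k) :=
        mul_le_mul_of_nonneg_left hJ1' hαpos.le
      have hmul2 : 0 ≤ α k * (1 - α k) * ‖x k - T k‖^2 :=
        mul_nonneg (mul_nonneg hαpos.le (by linarith)) hDnn
      nlinarith [hcombo, hmul, hmul2, mul_le_mul_of_nonneg_right hca hSk]
    · have hc2 : c ≤ 2 - αplus := min_le_right _ _
      have hca : c ≤ α k * (2 - α k) := by nlinarith [hαplus.2]
      have hmul : α k * ‖T k - z‖^2 ≤ α k * (‖x k - z‖^2 - S k) :=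
        mul_le_mul_of_nonneg_left hJ1' hαpos.le
      have hmul2 : α k * (α k - 1) * ‖x k - T k‖^2 ≤ α k * (α k - 1) * S k :=
        mul_le_mul_of_nonneg_left hD (mul_nonneg hαpos.le (by linarith))
      nlinarith [hcombo, hmul, hmul2, mul_le_mul_of_nonneg_right hca hSk]
  -- antitone squared distances
  have hanti : ∀ z, z ∈ (⋂ i, Cs i) → Antitone (fun k => ‖x k - z‖^2) := by
    intro z hz
    refine antitone_nat_of_succ_le fun k => ?_
    have := hfejer z hz k
    nlinarith [hSnn k, hcpos]
  have hlim : ∀ z, z ∈ (⋂ i, Cs i) →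
      ∃ L, Tendsto (fun k => ‖x k - z‖^2) atTop (𝓝 L) := by
    intro z hz
    refine ⟨_, tendsto_atTop_ciInf (hanti z hz) ⟨0, ?_⟩⟩
    rintro _ ⟨k, rfl⟩
    positivity
  -- S → 0
  have hS0 : Tendsto S atTop (𝓝 0) := by
    obtain ⟨L, hL⟩ := hlim z0 hz0
    have hdiff : Tendsto (fun k => (‖x k - z0‖^2 - ‖x (k+1) - z0‖^2)/c)
        atTop (𝓝 0) := by
      have h1 : Tendsto (fun k => ‖x (k+1) - z0‖^2) atTop (𝓝 L) :=
        hL.comp (tendsto_add_atTop_nat 1)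
      have := (hL.sub h1).div_const c
      simpa using this
    refine squeeze_zero hSnn (fun k => ?_) hdiff
    rw [le_div_iff₀ hcpos]
    nlinarith [hfejer z0 hz0 k]
  -- sup over Ik → 0
  have hb1 : Tendsto (fun k => (Ik k).sup' (hIkne k) fun i => infDist (x k) (Cs i))
      atTop (𝓝 0) := by
    have hub : ∀ k, ((Ik k).sup' (hIkne k) fun i => infDist (x k) (Cs i)) ≤
        Real.sqrt (S k / ωminus) := by
      intro k
      refine Finset.sup'_le _ _ fun i hi => ?_
      rw [← hPd k i, Real.le_sqrt (norm_nonneg _), le_div_iff₀ hωminus.1]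
      have hsingle : ω k i * ‖x k - P i (x k)‖^2 ≤ S k :=
        Finset.single_le_sum (f := fun j => ω k j * ‖x k - P j (x k)‖^2)
          (fun j hj => mul_nonneg (hωnn k j hj) (sq_nonneg _)) hi
      nlinarith [(hω k i hi).1, sq_nonneg ‖x k - P i (x k)‖]
      exact div_nonneg (hSnn k) hωminus.1.le
    have hlb : ∀ k, 0 ≤ (Ik k).sup' (hIkne k) fun i => infDist (x k) (Cs i) := by
      intro k
      obtain ⟨i0, hi0⟩ := hIkne k
      exact le_trans infDist_nonneg (Finset.le_sup' (fun i => infDist (x k) (Cs i)) hi0)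
    have hsq : Tendsto (fun k => Real.sqrt (S k / ωminus)) atTop (𝓝 0) := by
      have := (hS0.div_const ωminus).sqrt
      simpa using this
    exact squeeze_zero hlb hub hsq
  have hb2 := hiii hb1
  -- step sizes go to zero
  have hestep : ∀ k, ‖x (k+1) - x k‖ ≤ 2 * Real.sqrt (S k) := by
    intro k
    have h1 : x (k+1) - x k = α k • (T k - x k) := by
      rw [hrec k, add_sub_cancel_left]
    have h2 : ‖x (k+1) - x k‖ = α k * ‖T k - x k‖ := by
      rw [h1, norm_smul, Real.norm_eq_abs,
        abs_of_pos (lt_of_lt_of_le hαminus.1 (hα k).1)]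
    have h3 : ‖T k - x k‖ ≤ Real.sqrt (S k) := by
      rw [← Real.sqrt_sq (norm_nonneg (T k - x k))]
      exact Real.sqrt_le_sqrt (hTxS k)
    rw [h2]
    exact mul_le_mul (le_of_lt (lt_of_le_of_lt (hα k).2 hαplus.2)) h3
      (norm_nonneg _) (by norm_num)
  have he0 : Tendsto (fun k => ‖x (k+1) - x k‖) atTop (𝓝 0) := by
    refine squeeze_zero (fun k => norm_nonneg _) hestep ?_
    have := hS0.sqrt
    simpa using this.const_mul 2
  -- the uniform bound B
  have hb2nn : ∀ k, 0 ≤ (Jk k).sup' ((hIkne k).mono (hIJ k))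
      fun i => infDist (x k) (Cs i) := by
    intro k
    obtain ⟨i0, hi0⟩ := (hIkne k).mono (hIJ k)
    exact le_trans infDist_nonneg (Finset.le_sup' (fun i => infDist (x k) (Cs i)) hi0)
  have hBall : ∀ k i, infDist (x k) (Cs i) ≤
      (∑ l ∈ Finset.range s, (Jk (k+l)).sup' ((hIkne (k+l)).mono (hIJ (k+l)))
        fun i => infDist (x (k+l)) (Cs i)) +
      ∑ j ∈ Finset.range s, ‖x (k+j+1) - x (k+j)‖ := by
    intro k i
    obtain ⟨l, hls, hil⟩ := hcover k i
    have h1 : infDist (x k) (Cs i) ≤ infDist (x (k+l)) (Cs i) + dist (x k) (x (k+l)) :=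
      infDist_le_infDist_add_dist
    have h2 : infDist (x (k+l)) (Cs i) ≤
        (Jk (k+l)).sup' ((hIkne (k+l)).mono (hIJ (k+l)))
          fun i => infDist (x (k+l)) (Cs i) :=
      Finset.le_sup' (fun i => infDist (x (k+l)) (Cs i)) hil
    have h3 : dist (x k) (x (k+l)) ≤ ∑ j ∈ Finset.range l, ‖x (k+j+1) - x (k+j)‖ := by
      have h := dist_le_range_sum_dist (fun j => x (k+j)) l
      simp only [Nat.add_zero] at h
      refine h.trans (le_of_eq (Finset.sum_congr rfl fun j hj => ?_))
      rw [dist_eq_norm, norm_sub_rev, Nat.add_assoc]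
    have h4 : ((Jk (k+l)).sup' ((hIkne (k+l)).mono (hIJ (k+l)))
          fun i => infDist (x (k+l)) (Cs i)) ≤
        ∑ l' ∈ Finset.range s, (Jk (k+l')).sup' ((hIkne (k+l')).mono (hIJ (k+l')))
          fun i => infDist (x (k+l')) (Cs i) :=
      Finset.single_le_sum (fun l' _ => hb2nn (k+l')) (Finset.mem_range.mpr hls)
    have h5 : ∑ j ∈ Finset.range l, ‖x (k+j+1) - x (k+j)‖ ≤
        ∑ j ∈ Finset.range s, ‖x (k+j+1) - x (k+j)‖ :=
      Finset.sum_le_sum_of_subset_of_nonneg (Finset.range_subset_range.mpr hls.le)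
        (fun j _ _ => norm_nonneg _)
    linarith
  have hB0 : Tendsto (fun k =>
      (∑ l ∈ Finset.range s, (Jk (k+l)).sup' ((hIkne (k+l)).mono (hIJ (k+l)))
        fun i => infDist (x (k+l)) (Cs i)) +
      ∑ j ∈ Finset.range s, ‖x (k+j+1) - x (k+j)‖) atTop (𝓝 0) := by
    have hsum1 : Tendsto (fun k => ∑ l ∈ Finset.range s,
        (Jk (k+l)).sup' ((hIkne (k+l)).mono (hIJ (k+l)))
          fun i => infDist (x (k+l)) (Cs i)) atTop (𝓝 0) := by
      have := tendsto_finset_sum (Finset.range s)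
        (fun l (_ : l ∈ Finset.range s) => hb2.comp (tendsto_add_atTop_nat l))
      simpa using this
    have hsum2 : Tendsto (fun k => ∑ j ∈ Finset.range s, ‖x (k+j+1) - x (k+j)‖)
        atTop (𝓝 0) := by
      have := tendsto_finset_sum (Finset.range s)
        (fun j (_ : j ∈ Finset.range s) => he0.comp (tendsto_add_atTop_nat j))
      simpa using this
    simpa using hsum1.add hsum2
  have hdisti : ∀ i, Tendsto (fun k => infDist (x k) (Cs i)) atTop (𝓝 0) :=
    fun i => squeeze_zero (fun k => infDist_nonneg) (fun k => hBall k i) hB0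
  have hsupu : Tendsto (fun k => Finset.univ.sup' Finset.univ_nonempty
      fun i => infDist (x k) (Cs i)) atTop (𝓝 0) := by
    refine squeeze_zero (fun k => ?_)
      (fun k => Finset.sup'_le _ _ fun i _ => hBall k i) hB0
    obtain ⟨i0, hi0⟩ := Finset.univ_nonempty (α := Fin m)
    exact le_trans infDist_nonneg (Finset.le_sup' (fun i => infDist (x k) (Cs i)) hi0)
  -- boundedness of the sequence
  have hMx : ∀ k, ‖x k‖ ≤ ‖x 0 - z0‖ + ‖z0‖ := by
    intro k
    have h1 : ‖x k - z0‖^2 ≤ ‖x 0 - z0‖^2 := hanti z0 hz0 (Nat.zero_le k)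
    have h2 : ‖x k - z0‖ ≤ ‖x 0 - z0‖ := by
      nlinarith [norm_nonneg (x k - z0), norm_nonneg (x 0 - z0)]
    calc ‖x k‖ = ‖(x k - z0) + z0‖ := by rw [sub_add_cancel]
    _ ≤ ‖x k - z0‖ + ‖z0‖ := norm_add_le _ _
    _ ≤ ‖x 0 - z0‖ + ‖z0‖ := by linarith
  -- weak subsequential limit in C
  obtain ⟨φ, hφ, xinf, hxinfC, hweak⟩ :=
    weak_subseq_mem Cs hCscl hCscv P hP x _ hMx hdisti
  -- full-sequence convergence of inner products against differences of points of C
  have hfull : ∀ z ∈ (⋂ i, Cs i), ∀ z' ∈ (⋂ i, Cs i),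
      ∃ t : ℝ, Tendsto (fun k => ⟪x k, z - z'⟫) atTop (𝓝 t) := by
    intro z hz z' hz'
    obtain ⟨L, hL⟩ := hlim z hz
    obtain ⟨L', hL'⟩ := hlim z' hz'
    refine ⟨(L' - L - ‖z'‖^2 + ‖z‖^2)/2, ?_⟩
    have h1 : Tendsto (fun k => (‖x k - z'‖^2 - ‖x k - z‖^2 - ‖z'‖^2 + ‖z‖^2)/2)
        atTop (𝓝 ((L' - L - ‖z'‖^2 + ‖z‖^2)/2)) :=
      (((hL'.sub hL).sub_const _).add_const _).div_const 2
    refine h1.congr fun k => ?_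
    have e1 := norm_sub_sq_real (x k) z
    have e2 := norm_sub_sq_real (x k) z'
    have e3 : ⟪x k, z - z'⟫ = ⟪x k, z⟫ - ⟪x k, z'⟫ := inner_sub_right _ _ _
    linarith
  -- whole-sequence weak convergence
  have hweakfull : ∀ w : H, Tendsto (fun k => ⟪x k, w⟫) atTop (𝓝 ⟪xinf, w⟫) := by
    intro w
    refine tendsto_of_subseq_tendsto fun ns hns => ?_
    obtain ⟨ψ, hψ, p, hpC, hpweak⟩ :=
      weak_subseq_mem Cs hCscl hCscv P hP (fun k => x (ns k)) _
        (fun k => hMx _) (fun i => (hdisti i).comp hns)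
    obtain ⟨t, ht⟩ := hfull xinf hxinfC p hpC
    have h1 : ⟪xinf, xinf - p⟫ = t :=
      tendsto_nhds_unique (hweak (xinf - p)) (ht.comp hφ.tendsto_atTop)
    have h2 : ⟪p, xinf - p⟫ = t :=
      tendsto_nhds_unique (hpweak (xinf - p)) (ht.comp (hns.comp hψ.tendsto_atTop))
    have h3 : p = xinf := by
      have h4 : ⟪xinf - p, xinf - p⟫ = (0:ℝ) := by
        rw [inner_sub_left, h1, h2]; ring
      rw [inner_self_eq_zero, sub_eq_zero] at h4
      exact h4.symm
    refine ⟨ψ, ?_⟩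
    have := hpweak w
    rwa [h3] at this
  refine ⟨xinf, hxinfC, hweakfull, ?_⟩
  -- strong convergence under bounded regularity
  intro BR
  have hxbdd : IsBounded (Set.range x) := by
    rw [isBounded_iff_forall_norm_le]
    exact ⟨‖x 0 - z0‖ + ‖z0‖, by rintro _ ⟨k, rfl⟩; exact hMx k⟩
  have hdC : Tendsto (fun k => infDist (x k) (⋂ i, Cs i)) atTop (𝓝 0) :=
    BR x hxbdd hsupu
  have hcauchy : CauchySeq x := by
    rw [Metric.cauchySeq_iff']
    intro ε hε
    obtain ⟨N, hN⟩ := Metric.tendsto_atTop.mp hdC (ε/3) (by linarith)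
    have hNd : infDist (x N) (⋂ i, Cs i) < ε/3 := by
      have := hN N le_rfl
      rw [Real.dist_eq, sub_zero] at this
      exact lt_of_abs_lt this
    obtain ⟨z, hzC, hzd⟩ := (infDist_lt_iff ⟨z0, hz0⟩).mp hNd
    refine ⟨N, fun n hn => ?_⟩
    have h1 : ‖x n - z‖^2 ≤ ‖x N - z‖^2 := hanti z hzC hn
    have h2 : ‖x n - z‖ ≤ ‖x N - z‖ := by
      nlinarith [norm_nonneg (x n - z), norm_nonneg (x N - z)]
    have h3 : dist (x N) z < ε/3 := hzd
    calc dist (x n) (x N) ≤ dist (x n) z + dist z (x N) := dist_triangle _ _ _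
    _ = ‖x n - z‖ + ‖x N - z‖ := by rw [dist_eq_norm, dist_comm, dist_eq_norm]
    _ ≤ ‖x N - z‖ + ‖x N - z‖ := by linarith
    _ < ε := by
        rw [dist_eq_norm] at h3
        linarith
  obtain ⟨l, hl⟩ := cauchySeq_tendsto_of_complete hcauchy
  have hlx : l = xinf := by
    have h1 : ∀ w : H, ⟪l, w⟫ = ⟪xinf, w⟫ := fun w =>
      tendsto_nhds_unique (Filter.Tendsto.inner (𝕜 := ℝ) hl tendsto_const_nhds)
        (hweakfull w)
    have h2 := h1 (l - xinf)
    have h3 : ⟪l - xinf, l - xinf⟫ = (0:ℝ) := by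
      rw [inner_sub_left, h2]; ring
    rwa [inner_self_eq_zero, sub_eq_zero] at h3
  rwa [hlx] at hl
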